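/- For a Hermitian matrix u with trace zero, the curve t ↦ exp(tu) satisfies d_H(exp(su), exp(tu)) = |t - s|·(λ_max(u) - λ_min(u)), where d_H is the Hilbert pseudo-metric on positive definite matrices. -/

import Mathlib

open scoped ComplexOrder

/-- `Mmat A B = inf {t > 0 : t • B - A` positive definite `}`. -/
noncomputable def Mmat {n : ℕ} (A B : Matrix (Fin n) (Fin n) ℂ) : ℝ :=
  sInf {t : ℝ | 0 < t ∧ (t • B - A).PosDef}

/-- The Hilbert pseudo-metric `d_H(A,B) = log (M(A,B) · M(B,A))`. -/
noncomputable def dHilbert {n : ℕ} (A B : Matrix (Fin n) (Fin n) ℂ) : ℝ :=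
  Real.log (Mmat A B * Mmat B A)

open Matrix

lemma posDef_unitary_conj {n : ℕ} {U A : Matrix (Fin n) (Fin n) ℂ}
    (hU : U ∈ Matrix.unitaryGroup (Fin n) ℂ) (hA : A.PosDef) :
    (U * A * star U).PosDef := by
  rw [Matrix.star_eq_conjTranspose, Matrix.posDef_iff_dotProduct_mulVec]
  constructor
  · exact Matrix.isHermitian_mul_mul_conjTranspose U hA.1
  · intro x hx
    have hx' : Uᴴ *ᵥ x ≠ 0 := by
      intro h
      apply hx
      have h2 := congrArg (fun y => U *ᵥ y) h
      simpa [Matrix.mulVec_mulVec, ← Matrix.star_eq_conjTranspose,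
        Matrix.mem_unitaryGroup_iff.mp hU] using h2
    have := hA.dotProduct_mulVec_pos hx'
    simpa only [star_mulVec, dotProduct_mulVec, vecMul_vecMul,
      conjTranspose_conjTranspose, Matrix.mul_assoc] using this

lemma posDef_unitary_conj_iff {n : ℕ} {U A : Matrix (Fin n) (Fin n) ℂ}
    (hU : U ∈ Matrix.unitaryGroup (Fin n) ℂ) :
    (U * A * star U).PosDef ↔ A.PosDef := by
  constructor
  · intro h
    have := posDef_unitary_conj (Unitary.star_mem hU) h
    have hU2 : star U * U = 1 := Matrix.mem_unitaryGroup_iff'.mp hU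
    have hU1 : U * star U = 1 := Matrix.mem_unitaryGroup_iff.mp hU
    have heq : star U * (U * A * star U) * star (star U) = A := by
      rw [star_star]
      calc star U * (U * A * star U) * U = (star U * U) * A * (star U * U) := by
            noncomm_ring
        _ = A := by rw [hU2, one_mul, mul_one]
    rwa [heq] at this
  · exact posDef_unitary_conj hU

lemma exp_smul_eq {n : ℕ} (u : Matrix (Fin n) (Fin n) ℂ) (hu : u.IsHermitian) (a : ℝ) :
    NormedSpace.exp (a • u) =
      (hu.eigenvectorUnitary : Matrix (Fin n) (Fin n) ℂ) *
        Matrix.diagonal (fun i => (Real.exp (a * hu.eigenvalues i) : ℂ)) *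
        star (hu.eigenvectorUnitary : Matrix (Fin n) (Fin n) ℂ) := by
  set U : Matrix (Fin n) (Fin n) ℂ := (hu.eigenvectorUnitary : Matrix (Fin n) (Fin n) ℂ) with hUdef
  have hU1 : U * star U = 1 := Matrix.mem_unitaryGroup_iff.mp hu.eigenvectorUnitary.2
  have hU2 : star U * U = 1 := Matrix.mem_unitaryGroup_iff'.mp hu.eigenvectorUnitary.2
  have hUunit : IsUnit U := ⟨⟨U, star U, hU1, hU2⟩, rfl⟩
  have hUinv : U⁻¹ = star U := Matrix.inv_eq_left_inv hU2
  have h1 : a • u = U * Matrix.diagonal (fun i => ((a * hu.eigenvalues i : ℝ) : ℂ)) * U⁻¹ := by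
    rw [hUinv]
    conv_lhs => rw [hu.spectral_theorem, Unitary.conjStarAlgAut_apply]
    rw [← smul_mul_assoc, ← mul_smul_comm]
    congr 1
    congr 1
    ext i k
    rcases eq_or_ne i k with rfl | hik
    · simp [Matrix.diagonal_apply_eq, Complex.real_smul]
    · simp [Matrix.diagonal_apply_ne _ hik]
  have hv : NormedSpace.exp (fun i => ((a * hu.eigenvalues i : ℝ) : ℂ))
      = fun i => (Real.exp (a * hu.eigenvalues i) : ℂ) := by
    rw [Pi.exp_def]
    funext i
    rw [← Complex.exp_eq_exp_ℂ, Complex.ofReal_exp]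
  rw [h1, Matrix.exp_conj U _ hUunit, hUinv, Matrix.exp_diagonal, hv]

/-- For a trace-zero Hermitian matrix `u`, the curve `t ↦ exp (t u)` satisfies
`d_H(exp (s u), exp (t u)) = |t - s| * (λ_max u - λ_min u)` for the Hilbert
pseudo-metric on positive definite matrices. -/
theorem dHilbert_exp_geodesic {n : ℕ} (hn : 0 < n)
    (u : Matrix (Fin n) (Fin n) ℂ) (hu : u.IsHermitian) (htr : u.trace = 0)
    (s t : ℝ) :
    dHilbert (NormedSpace.exp (s • u)) (NormedSpace.exp (t • u)) =
      |t - s| * ((⨆ i, hu.eigenvalues i) - ⨅ i, hu.eigenvalues i) := by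
  have hne : Nonempty (Fin n) := ⟨⟨0, hn⟩⟩
  set ev := hu.eigenvalues with hev
  have key : ∀ a b : ℝ, Mmat (NormedSpace.exp (a • u)) (NormedSpace.exp (b • u))
      = Real.exp (⨆ i, (a - b) * ev i) := by
    intro a b
    set U : Matrix (Fin n) (Fin n) ℂ := (hu.eigenvectorUnitary : Matrix (Fin n) (Fin n) ℂ) with hUdef
    have hUmem : U ∈ Matrix.unitaryGroup (Fin n) ℂ := hu.eigenvectorUnitary.2
    obtain ⟨j, hj⟩ := Finite.exists_max (fun i => (a - b) * ev i)
    have hC : (⨆ i, (a - b) * ev i) = (a - b) * ev j :=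
      le_antisymm (ciSup_le hj) (le_ciSup (f := fun i => (a - b) * ev i) (Set.Finite.bddAbove (Set.finite_range _)) j)
    have hiff : ∀ (i : Fin n) (r : ℝ),
        (0 < r * Real.exp (b * ev i) - Real.exp (a * ev i)) ↔
          Real.exp ((a - b) * ev i) < r := by
      intro i r
      have hE : Real.exp (a * ev i) = Real.exp ((a - b) * ev i) * Real.exp (b * ev i) := by
        rw [← Real.exp_add]; ring_nf
      rw [sub_pos, hE, mul_lt_mul_iff_of_pos_right (Real.exp_pos _)]
    have hset : {r : ℝ | 0 < r ∧
        (r • NormedSpace.exp (b • u) - NormedSpace.exp (a • u)).PosDef}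
        = Set.Ioi (Real.exp ((a - b) * ev j)) := by
      ext r
      have hdiff : r • NormedSpace.exp (b • u) - NormedSpace.exp (a • u)
          = U * Matrix.diagonal
              (fun i => ((r * Real.exp (b * ev i) - Real.exp (a * ev i) : ℝ) : ℂ)) * star U := by
        rw [exp_smul_eq u hu a, exp_smul_eq u hu b,
          ← smul_mul_assoc, ← mul_smul_comm, ← sub_mul, ← mul_sub]
        congr 2
        ext i k
        rcases eq_or_ne i k with rfl | hik
        · simp [Matrix.diagonal_apply_eq, Complex.real_smul, hev]
        · simp [Matrix.diagonal_apply_ne _ hik]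
      simp only [Set.mem_setOf_eq, Set.mem_Ioi, hdiff]
      rw [posDef_unitary_conj_iff hUmem, Matrix.posDef_diagonal_iff]
      constructor
      · rintro ⟨hr, h⟩
        have hj' := h j
        rw [Complex.zero_lt_real, hiff] at hj'
        exact hj'
      · intro h
        refine ⟨lt_trans (Real.exp_pos _) h, fun i => ?_⟩
        rw [Complex.zero_lt_real, hiff]
        exact lt_of_le_of_lt (Real.exp_le_exp.mpr (hj i)) h
    rw [Mmat, hset, csInf_Ioi, hC]
  rw [dHilbert, key s t, key t s, ← Real.exp_add, Real.log_exp]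
  rcases le_total s t with h | h
  · have h1 : s - t ≤ 0 := by linarith
    have h2 : (0 : ℝ) ≤ t - s := by linarith
    have e1 : (⨆ i, (s - t) * ev i) = (s - t) * ⨅ i, ev i :=
      (Real.mul_iInf_of_nonpos h1 ev).symm
    have e2 : (⨆ i, (t - s) * ev i) = (t - s) * ⨆ i, ev i :=
      (Real.mul_iSup_of_nonneg h2 ev).symm
    rw [e1, e2, abs_of_nonneg h2]
    ring
  · have h1 : (0 : ℝ) ≤ s - t := by linarith
    have h2 : t - s ≤ 0 := by linarith
    have e1 : (⨆ i, (s - t) * ev i) = (s - t) * ⨆ i, ev i :=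
      (Real.mul_iSup_of_nonneg h1 ev).symm
    have e2 : (⨆ i, (t - s) * ev i) = (t - s) * ⨅ i, ev i :=
      (Real.mul_iInf_of_nonpos h2 ev).symm
    rw [e1, e2, abs_of_nonpos h2]
    ring
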